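/- Let W₁(S) ≤ 0 < W_e < W₂(S) ≤ 1 < r ≤ W₃(S) be real numbers for each S > P (where W_e, r are constants, P ≥ 0), and let W : (P, ∞) → ℝ be C¹ with: (i) W(S) < W₂(S) for all S > P; (ii) W(S) → W_e⁺ with W(S) > W_e for all large S; (iii) whenever dW/dS(S) = 0 one has W(S) ∈ {W₁(S), W₂(S), W₃(S)}. Then W(S) > W₁(S) and in fact W(S) ≥ W_e for all S > P. -/
import Mathlib


noncomputable section

/-- abstract barrier argument. Given root curves `W₁ ≤ 0 < W_e < W₂ ≤ 1 < r ≤ W₃`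
on `(P,∞)`, a `C¹` function `W` with `W < W₂`, `W → W_e⁺` with `W > W_e` for large `S`, and
whose critical points can only lie on the root curves, one has `W > W₁` and `W ≥ W_e` on
`(P,∞)`. -/
theorem barrier_argument (P We r : ℝ) (hP : 0 ≤ P)
    (W W' W₁ W₂ W₃ : ℝ → ℝ)
    (horder : ∀ S, P < S →
      W₁ S ≤ 0 ∧ 0 < We ∧ We < W₂ S ∧ W₂ S ≤ 1 ∧ 1 < r ∧ r ≤ W₃ S)
    (hW₁c : ContinuousOn W₁ (Set.Ioi P))
    (hW₂c : ContinuousOn W₂ (Set.Ioi P))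
    (hW₃c : ContinuousOn W₃ (Set.Ioi P))
    (hW : ∀ S, P < S → HasDerivAt W (W' S) S)
    (hW'c : ContinuousOn W' (Set.Ioi P))
    (hlt : ∀ S, P < S → W S < W₂ S)
    (hlim : Filter.Tendsto W Filter.atTop (nhds We))
    (htail : ∃ S₁, P < S₁ ∧ ∀ S, S₁ ≤ S → We < W S)
    (hcrit : ∀ S, P < S → W' S = 0 → W S = W₁ S ∨ W S = W₂ S ∨ W S = W₃ S) :
    ∀ S, P < S → W₁ S < W S ∧ We ≤ W S := by
  have hWcont : ContinuousOn W (Set.Ioi P) := fun s hs =>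
    (hW s hs).continuousAt.continuousWithinAt
  have key : ∀ S, P < S → We ≤ W S := by
    by_contra h
    push_neg at h
    obtain ⟨S₀, hS₀P, hS₀⟩ := h
    obtain ⟨S₁, hS₁P, hS₁⟩ := htail
    have hS₀S₁ : S₀ < S₁ := by
      by_contra hc
      push_neg at hc
      exact absurd (hS₁ S₀ hc) (not_lt.2 hS₀.le)
    set K : Set ℝ := {s ∈ Set.Icc S₀ S₁ | W s ≤ We} with hK
    have hKsub : K ⊆ Set.Icc S₀ S₁ := fun s hs => hs.1
    have hIccsub : Set.Icc S₀ S₁ ⊆ Set.Ioi P := fun s hs => lt_of_lt_of_le hS₀P hs.1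
    have hKclosed : IsClosed K := by
      have : K = Set.Icc S₀ S₁ ∩ W ⁻¹' (Set.Iic We) := by
        ext s; simp [hK, Set.mem_sep_iff, Set.mem_preimage, Set.mem_Iic, and_comm]
      rw [this]
      exact ContinuousOn.preimage_isClosed_of_isClosed (hWcont.mono hIccsub)
        isClosed_Icc isClosed_Iic
    have hKcomp : IsCompact K := isCompact_Icc.of_isClosed_subset hKclosed hKsub
    have hKne : K.Nonempty := ⟨S₀, ⟨le_refl _, hS₀S₁.le⟩, hS₀.le⟩
    set t := sSup K with hts
    have htK : t ∈ K := hKcomp.sSup_mem hKne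
    have htP : P < t := lt_of_lt_of_le hS₀P htK.1.1
    have hgt : ∀ s, t < s → We < W s := by
      intro s hs
      rcases le_or_gt S₁ s with hc | hc
      · exact hS₁ s hc
      · by_contra hc2
        push_neg at hc2
        have : s ∈ K := ⟨⟨le_trans htK.1.1 hs.le, hc.le⟩, hc2⟩
        exact absurd (le_csSup hKcomp.bddAbove this) (not_le.2 hs)
    have hWtge : We ≤ W t := by
      have hcW : Filter.Tendsto W (nhdsWithin t (Set.Ioi t)) (nhds (W t)) :=
        ((hW t htP).continuousAt.tendsto).mono_left nhdsWithin_le_nhds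
      exact ge_of_tendsto hcW
        (Filter.eventually_of_mem self_mem_nhdsWithin (fun s hs => (hgt s hs).le))
    have hnonvanish : ∀ s, t ≤ s → W' s ≠ 0 := by
      intro s hst h0
      have hsP : P < s := lt_of_lt_of_le htP hst
      obtain ⟨h1, h2, h3, h4, h5, h6⟩ := horder s hsP
      have hWs : We ≤ W s := by
        rcases eq_or_lt_of_le hst with rfl | hlt'
        · exact hWtge
        · exact (hgt s hlt').le
      have hWlt2 := hlt s hsP
      rcases hcrit s hsP h0 with hh | hh | hh <;> linarith
    have hIcisub : Set.Ici t ⊆ Set.Ioi P := fun s hs => lt_of_lt_of_le htP hs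
    have hWcontIci : ContinuousOn W (Set.Ici t) := hWcont.mono hIcisub
    have ht1 : We < W (t + 1) := hgt (t + 1) (by linarith)
    rcases (hnonvanish t le_rfl).lt_or_gt with hneg | hpos
    · -- W' < 0 on Ici t, W strictly decreasing, contradiction with hgt
      have hderiv : ∀ x ∈ interior (Set.Ici t), deriv W x < 0 := by
        intro x hx
        rw [interior_Ici] at hx
        have hxP : P < x := lt_of_lt_of_le htP (le_of_lt hx)
        rw [(hW x hxP).deriv]
        rcases (hnonvanish x hx.le).lt_or_gt with h | h
        · exact h
        · exfalso
          have hcont : ContinuousOn W' (Set.Icc t x) :=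
            hW'c.mono (fun s hs => lt_of_lt_of_le htP hs.1)
          have : (0:ℝ) ∈ Set.Icc (W' t) (W' x) := ⟨hneg.le, h.le⟩
          obtain ⟨c, hc, hc0⟩ := intermediate_value_Icc hx.le hcont this
          exact hnonvanish c hc.1 hc0
      have hanti : StrictAntiOn W (Set.Ici t) :=
        strictAntiOn_of_deriv_neg (convex_Ici t) hWcontIci hderiv
      have := hanti (Set.self_mem_Ici) (by simp : t + 1 ∈ Set.Ici t) (by linarith)
      have hWtle : W t ≤ We := htK.2
      linarith
    · -- W' > 0 on Ici t, W strictly increasing, contradicts limit We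
      have hderiv : ∀ x ∈ interior (Set.Ici t), 0 < deriv W x := by
        intro x hx
        rw [interior_Ici] at hx
        have hxP : P < x := lt_of_lt_of_le htP (le_of_lt hx)
        rw [(hW x hxP).deriv]
        rcases (hnonvanish x hx.le).lt_or_gt with h | h
        · exfalso
          have hcont : ContinuousOn W' (Set.Icc t x) :=
            hW'c.mono (fun s hs => lt_of_lt_of_le htP hs.1)
          have : (0:ℝ) ∈ Set.Icc (W' x) (W' t) := ⟨h.le, hpos.le⟩
          obtain ⟨c, hc, hc0⟩ := intermediate_value_Icc' hx.le hcont this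
          exact hnonvanish c hc.1 hc0
        · exact h
      have hmono : StrictMonoOn W (Set.Ici t) :=
        strictMonoOn_of_deriv_pos (convex_Ici t) hWcontIci hderiv
      have hev : ∀ᶠ s in Filter.atTop, W (t + 1) ≤ W s := by
        rw [Filter.eventually_atTop]
        refine ⟨t + 1, fun s hs => ?_⟩
        exact (hmono.monotoneOn (by simp : t + 1 ∈ Set.Ici t)
          (by simp; linarith : s ∈ Set.Ici t) hs)
      have := ge_of_tendsto hlim hev
      linarith
  intro S hS
  obtain ⟨h1, h2, _⟩ := horder S hS
  exact ⟨lt_of_le_of_lt h1 (lt_of_lt_of_le h2 (key S hS)), key S hS⟩
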